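/- Let A ⊆ M^k be definable in an o-minimal structure, X = Sp(A), and C ⊆ X type-definable (closed in the Stone topology). Then the closure of C in the spectral topology equals the union over x ∈ C of the closures of the singletons {x}. -/

import Mathlib

open FirstOrder Set Classical

/-- `Defin L M s` : the set `s ⊆ Mᵏ` is definable in the structure `M` with parameters from `M`. -/
def Defin (L : FirstOrder.Language) (M : Type) [L.Structure M] {k : ℕ}
    (s : Set (Fin k → M)) : Prop :=
  Set.Definable (Set.univ : Set M) L s

/-- `M` is an o-minimal structure: the order is definable, and every definable subset of `M`
is a finite union of points and open intervals (possibly unbounded). -/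
def IsOMin (L : FirstOrder.Language) (M : Type) [L.Structure M] [LinearOrder M] : Prop :=
  Set.Definable (Set.univ : Set M) L {p : Fin 2 → M | p 0 < p 1} ∧
  ∀ s : Set (Fin 1 → M), Defin L M s →
    ∃ (F : Finset M) (n : ℕ) (J : Fin n → Set M),
      (∀ i, (∃ a b, J i = Set.Ioo a b) ∨ (∃ a, J i = Set.Ioi a) ∨
            (∃ b, J i = Set.Iio b) ∨ J i = Set.univ) ∧
      (fun p : Fin 1 → M => p 0) '' s = ↑F ∪ ⋃ i, J i

/-- `M` expands an ordered group: the graph of addition is definable. -/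
def ExpandsGroup (L : FirstOrder.Language) (M : Type) [L.Structure M] [Add M] : Prop :=
  Set.Definable (Set.univ : Set M) L {p : Fin 3 → M | p 0 + p 1 = p 2}

/-- `M` expands a (real closed, by o-minimality) field: graphs of `+` and `*` are definable. -/
def ExpandsField (L : FirstOrder.Language) (M : Type) [L.Structure M] [Add M] [Mul M] : Prop :=
  Set.Definable (Set.univ : Set M) L {p : Fin 3 → M | p 0 + p 1 = p 2} ∧
  Set.Definable (Set.univ : Set M) L {p : Fin 3 → M | p 0 * p 1 = p 2}

/-- o-minimal dimension of a subset of `Mᵏ` : the largest `d` such that some coordinate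
projection onto `M^d` has nonempty interior; `-1` for the empty set. -/

noncomputable def odim {M : Type} [TopologicalSpace M] {k : ℕ} (s : Set (Fin k → M)) : ℤ :=
  if s.Nonempty then
    ((sSup {d : ℕ | ∃ f : Fin d → Fin k, Function.Injective f ∧
      (interior ((fun x : Fin k → M => x ∘ f) '' s)).Nonempty} : ℕ) : ℤ)
  else -1

/-- A point of the o-minimal spectrum `Sp A`: a complete type over `M` concentrated on `A`,
presented as an ultrafilter on the Boolean algebra of definable subsets of `A`. -/
structure OType (L : FirstOrder.Language) (M : Type) [L.Structure M] {k : ℕ}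
    (A : Set (Fin k → M)) where
  sets : Set (Set (Fin k → M))
  definable_mem : ∀ s ∈ sets, Defin L M s
  subset_mem : ∀ s ∈ sets, s ⊆ A
  top_mem : A ∈ sets
  nonempty_mem : ∀ s ∈ sets, s.Nonempty
  inter_mem : ∀ s ∈ sets, ∀ t ∈ sets, s ∩ t ∈ sets
  complete : ∀ s : Set (Fin k → M), Defin L M s → s ⊆ A → (s ∈ sets ∨ A \ s ∈ sets)

/-- The spectral topology on `Sp A`, generated by the sets `Sp U` for `U` open definable. -/
instance OType.topology (L : FirstOrder.Language) (M : Type) [L.Structure M] [TopologicalSpace M]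
    {k : ℕ} (A : Set (Fin k → M)) : TopologicalSpace (OType L M A) :=
  TopologicalSpace.generateFrom
    {V | ∃ U : Set (Fin k → M), IsOpen U ∧ Defin L M U ∧
      V = {x : OType L M A | U ∩ A ∈ x.sets}}

/-- The dimension of a type: the minimal dimension of a definable set on which it concentrates. -/
noncomputable def OType.tdim {L : FirstOrder.Language} {M : Type} [L.Structure M]
    [TopologicalSpace M] {k : ℕ} {A : Set (Fin k → M)} (x : OType L M A) : ℤ :=
  sInf {d : ℤ | ∃ s ∈ x.sets, odim s = d}

/-- `C ⊆ Sp A` is type-definable iff it is an intersection of sets `Sp D`, `D ⊆ A`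
definable (equivalently, closed in the Stone topology). -/
def TypeDef (L : FirstOrder.Language) (M : Type) [L.Structure M] {k : ℕ}
    {A : Set (Fin k → M)} (C : Set (OType L M A)) : Prop :=
  ∃ I : Set (Set (Fin k → M)), (∀ D ∈ I, Defin L M D ∧ D ⊆ A) ∧
    C = ⋂ D ∈ I, {x : OType L M A | D ∈ x.sets}


lemma otype_mem_of_superset {L : FirstOrder.Language} {M : Type} [L.Structure M] {k : ℕ}
    {A : Set (Fin k → M)} (z : OType L M A) {s t : Set (Fin k → M)} (hs : s ∈ z.sets)
    (ht : Defin L M t) (htA : t ⊆ A) (hst : s ⊆ t) : t ∈ z.sets := by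
  rcases z.complete t ht htA with h | h
  · exact h
  · exfalso
    obtain ⟨a, ha⟩ := z.nonempty_mem _ (z.inter_mem s hs _ h)
    exact ha.2.2 (hst ha.1)

lemma otype_sInter_mem {L : FirstOrder.Language} {M : Type} [L.Structure M] {k : ℕ}
    {A : Set (Fin k → M)} (z : OType L M A) (T : Finset (Set (Fin k → M)))
    (hT : ↑T ⊆ z.sets) : A ∩ ⋂₀ ↑T ∈ z.sets := by
  classical
  induction T using Finset.induction with
  | empty => simpa using z.top_mem
  | insert s T' hnot ih =>
    have hs : s ∈ z.sets := hT (by simp)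
    have hT' : (↑T' : Set (Set (Fin k → M))) ⊆ z.sets := by
      intro u hu; exact hT (by simp [Finset.mem_coe] at hu ⊢; exact Or.inr hu)
    have heq : A ∩ ⋂₀ ↑(insert s T') = s ∩ (A ∩ ⋂₀ (↑T' : Set (Set (Fin k → M)))) := by
      rw [Finset.coe_insert, Set.sInter_insert]
      ext a; constructor
      · rintro ⟨h1, h2, h3⟩; exact ⟨h2, h1, h3⟩
      · rintro ⟨h2, h1, h3⟩; exact ⟨h1, h2, h3⟩
    rw [heq]
    exact z.inter_mem s hs _ (ih hT')

/-- For `A ⊆ Mᵏ` definable in an o-minimal structure `M` expanding an ordered group and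
`C ⊆ Sp A` type-definable, the spectral closure of `C` is the union of the closures of the
singletons `{x}`, `x ∈ C`. -/
theorem stmt14 {L : FirstOrder.Language} {M : Type} [L.Structure M]
    [AddCommGroup M] [LinearOrder M] [IsOrderedAddMonoid M] [TopologicalSpace M] [OrderTopology M]
    (hmin : IsOMin L M) (hgrp : ExpandsGroup L M)
    {k : ℕ} (A : Set (Fin k → M)) (hA : Defin L M A)
    (C : Set (OType L M A)) (hC : TypeDef L M C) :
    closure C = ⋃ x ∈ C, closure ({x} : Set (OType L M A)) := by
  classical
  obtain ⟨I, hI, hCeq⟩ := hC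
  apply Set.Subset.antisymm
  · intro y hy
    -- the generating set of the spectral topology
    set S : Set (Set (OType L M A)) :=
      {V | ∃ U : Set (Fin k → M), IsOpen U ∧ Defin L M U ∧
        V = {x : OType L M A | U ∩ A ∈ x.sets}} with hS
    -- ambient collection: definable subsets of A
    set Amb : Set (Set (Fin k → M)) := {s | Defin L M s ∧ s ⊆ A} with hAmb
    -- the family to extend
    set F : Set (Set (Fin k → M)) := insert A (I ∪
      {s | ∃ U, IsOpen U ∧ Defin L M U ∧ s = U ∩ A ∧ U ∩ A ∈ y.sets}) with hF
    have hFAmb : F ⊆ Amb := by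
      rintro s (rfl | hs | ⟨U, hUo, hUd, rfl, hUy⟩)
      · exact ⟨hA, subset_rfl⟩
      · exact hI s hs
      · exact ⟨hUd.inter hA, Set.inter_subset_right⟩
    -- key: any finite subfamily of F is covered by a single basic open condition
    have key : ∀ T : Finset (Set (Fin k → M)), ↑T ⊆ F →
        ∃ U, IsOpen U ∧ Defin L M U ∧ U ∩ A ∈ y.sets ∧
          ∀ z : OType L M A, z ∈ C → U ∩ A ∈ z.sets → ↑T ⊆ z.sets := by
      intro T
      induction T using Finset.induction with
      | empty =>
        intro _
        refine ⟨Set.univ, isOpen_univ, Set.definable_univ, ?_, by simp⟩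
        simpa using y.top_mem
      | insert s T' hnot ih =>
        intro hT
        have hT' : (↑T' : Set (Set (Fin k → M))) ⊆ F := by
          intro u hu; exact hT (by simp [Finset.mem_coe] at hu ⊢; exact Or.inr hu)
        obtain ⟨U, hUo, hUd, hUy, hUz⟩ := ih hT'
        have hsF : s ∈ F := hT (by simp)
        rcases hsF with rfl | hsI | ⟨U', hU'o, hU'd, rfl, hU'y⟩
        · refine ⟨U, hUo, hUd, hUy, fun z hzC hzU => ?_⟩
          rw [Finset.coe_insert]
          exact Set.insert_subset z.top_mem (hUz z hzC hzU)
        · refine ⟨U, hUo, hUd, hUy, fun z hzC hzU => ?_⟩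
          rw [Finset.coe_insert]
          refine Set.insert_subset ?_ (hUz z hzC hzU)
          rw [hCeq] at hzC
          exact Set.mem_iInter₂.mp hzC s hsI
        · refine ⟨U ∩ U', hUo.inter hU'o, hUd.inter hU'd, ?_, ?_⟩
          · have heq : U ∩ U' ∩ A = (U ∩ A) ∩ (U' ∩ A) := by
              ext a; constructor
              · rintro ⟨⟨h1, h2⟩, h3⟩; exact ⟨⟨h1, h3⟩, h2, h3⟩
              · rintro ⟨⟨h1, h3⟩, h2, _⟩; exact ⟨⟨h1, h2⟩, h3⟩
            rw [heq]; exact y.inter_mem _ hUy _ hU'y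
          · intro z hzC hzU
            have h1 : U ∩ A ∈ z.sets :=
              otype_mem_of_superset z hzU (hUd.inter hA) Set.inter_subset_right
                (fun a ⟨⟨h1, _⟩, h3⟩ => ⟨h1, h3⟩)
            have h2 : U' ∩ A ∈ z.sets :=
              otype_mem_of_superset z hzU (hU'd.inter hA) Set.inter_subset_right
                (fun a ⟨⟨_, h2⟩, h3⟩ => ⟨h2, h3⟩)
            rw [Finset.coe_insert]
            exact Set.insert_subset h2 (hUz z hzC h1)
    -- F has the finite intersection property (relative to A)
    have hFIP_F : ∀ T : Finset (Set (Fin k → M)), ↑T ⊆ F → (A ∩ ⋂₀ ↑T).Nonempty := by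
      intro T hT
      obtain ⟨U, hUo, hUd, hUy, hUz⟩ := key T hT
      have hVopen : IsOpen {z : OType L M A | U ∩ A ∈ z.sets} :=
        TopologicalSpace.isOpen_generateFrom_of_mem ⟨U, hUo, hUd, rfl⟩
      obtain ⟨z, hzV, hzC⟩ := mem_closure_iff.mp hy _ hVopen hUy
      exact z.nonempty_mem _ (otype_sInter_mem z T (hUz z hzC hzV))
    -- Zorn's lemma
    set 𝒮 : Set (Set (Set (Fin k → M))) := {G | G ⊆ Amb ∧ F ⊆ G ∧
      ∀ T : Finset (Set (Fin k → M)), ↑T ⊆ G → (A ∩ ⋂₀ ↑T).Nonempty} with h𝒮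
    have hF𝒮 : F ∈ 𝒮 := ⟨hFAmb, subset_rfl, hFIP_F⟩
    have hchaincond : ∀ c ⊆ 𝒮, IsChain (· ⊆ ·) c → c.Nonempty →
        ∃ ub ∈ 𝒮, ∀ s ∈ c, s ⊆ ub := by
      intro c hc𝒮 hchain hcne
      refine ⟨⋃₀ c, ⟨?_, ?_, ?_⟩, fun s hs => Set.subset_sUnion_of_mem hs⟩
      · exact Set.sUnion_subset fun G hG => (hc𝒮 hG).1
      · obtain ⟨G0, hG0⟩ := hcne
        exact (hc𝒮 hG0).2.1.trans (Set.subset_sUnion_of_mem hG0)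
      · intro T hT
        have : ∃ G ∈ c, (↑T : Set (Set (Fin k → M))) ⊆ G := by
          induction T using Finset.induction with
          | empty =>
            obtain ⟨G0, hG0⟩ := hcne
            exact ⟨G0, hG0, by simp⟩
          | insert s T' hnot ih =>
            have hT'sub : (↑T' : Set (Set (Fin k → M))) ⊆ ⋃₀ c := by
              intro u hu; exact hT (by simp [Finset.mem_coe] at hu ⊢; exact Or.inr hu)
            obtain ⟨G1, hG1c, hG1⟩ := ih hT'sub
            obtain ⟨G2, hG2c, hsG2⟩ := hT (by simp : s ∈ ↑(insert s T'))
            rcases hchain.total hG1c hG2c with h | h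
            · refine ⟨G2, hG2c, ?_⟩
              rw [Finset.coe_insert]
              exact Set.insert_subset hsG2 (hG1.trans h)
            · refine ⟨G1, hG1c, ?_⟩
              rw [Finset.coe_insert]
              exact Set.insert_subset (h hsG2) hG1
        obtain ⟨G, hGc, hTG⟩ := this
        exact (hc𝒮 hGc).2.2 T hTG
    obtain ⟨m, hFm, hmmax⟩ := zorn_subset_nonempty 𝒮 hchaincond F hF𝒮
    have hm𝒮 : m ∈ 𝒮 := hmmax.1
    have hmaxkey : ∀ s ∈ Amb,
        (∀ T : Finset (Set (Fin k → M)), ↑T ⊆ insert s m → (A ∩ ⋂₀ ↑T).Nonempty) → s ∈ m := by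
      intro s hsAmb hfip
      have hmem : insert s m ∈ 𝒮 :=
        ⟨Set.insert_subset hsAmb hm𝒮.1, hm𝒮.2.1.trans (Set.subset_insert _ _), hfip⟩
      exact hmmax.2 hmem (Set.subset_insert _ _) (Set.mem_insert _ _)
    -- build the type x
    set x : OType L M A :=
      { sets := m
        definable_mem := fun s hs => (hm𝒮.1 hs).1
        subset_mem := fun s hs => (hm𝒮.1 hs).2
        top_mem := hFm (Set.mem_insert _ _)
        nonempty_mem := by
          intro s hs
          have := hm𝒮.2.2 {s} (by simpa using hs)
          simp only [Finset.coe_singleton, Set.sInter_singleton] at this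
          exact this.mono Set.inter_subset_right
        inter_mem := by
          intro s hs t ht
          apply hmaxkey (s ∩ t) ⟨(hm𝒮.1 hs).1.inter (hm𝒮.1 ht).1,
            Set.inter_subset_left.trans (hm𝒮.1 hs).2⟩
          intro T hT
          have hsub : (↑(insert s (insert t (T.erase (s ∩ t)))) : Set (Set (Fin k → M))) ⊆ m := by
            intro u hu
            simp only [Finset.coe_insert, Set.mem_insert_iff, Finset.mem_coe,
              Finset.mem_erase] at hu
            rcases hu with rfl | rfl | ⟨hne, hu⟩
            · exact hs
            · exact ht
            · rcases hT (Finset.mem_coe.mpr hu) with rfl | h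
              · exact absurd rfl hne
              · exact h
          refine (hm𝒮.2.2 _ hsub).mono ?_
          rintro a ⟨haA, ha⟩
          simp only [Finset.coe_insert, Set.mem_sInter, Set.mem_insert_iff,
            Finset.mem_coe, Finset.mem_erase] at ha
          refine ⟨haA, fun u hu => ?_⟩
          by_cases hust : u = s ∩ t
          · subst hust
            exact ⟨ha s (Or.inl rfl), ha t (Or.inr (Or.inl rfl))⟩
          · exact ha u (Or.inr (Or.inr ⟨hust, Finset.mem_coe.mp hu⟩))
        complete := by
          intro s hds hsA
          by_contra hcon
          push_neg at hcon
          obtain ⟨h1, h2⟩ := hcon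
          have hf1 : ¬ (∀ T : Finset (Set (Fin k → M)), ↑T ⊆ insert s m →
              (A ∩ ⋂₀ ↑T).Nonempty) := fun h => h1 (hmaxkey s ⟨hds, hsA⟩ h)
          have hf2 : ¬ (∀ T : Finset (Set (Fin k → M)), ↑T ⊆ insert (A \ s) m →
              (A ∩ ⋂₀ ↑T).Nonempty) := fun h => h2 (hmaxkey (A \ s)
                ⟨hA.sdiff hds, Set.diff_subset⟩ h)
          push_neg at hf1 hf2
          obtain ⟨T1, hT1, hT1e⟩ := hf1
          obtain ⟨T2, hT2, hT2e⟩ := hf2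
          have hsub : (↑(T1.erase s ∪ T2.erase (A \ s)) : Set (Set (Fin k → M))) ⊆ m := by
            intro u hu
            simp only [Finset.coe_union, Set.mem_union, Finset.mem_coe,
              Finset.mem_erase] at hu
            rcases hu with ⟨hne, hu⟩ | ⟨hne, hu⟩
            · rcases hT1 (Finset.mem_coe.mpr hu) with rfl | h
              · exact absurd rfl hne
              · exact h
            · rcases hT2 (Finset.mem_coe.mpr hu) with rfl | h
              · exact absurd rfl hne
              · exact h
          obtain ⟨a, haA, ha⟩ := hm𝒮.2.2 _ hsub
          simp only [Finset.coe_union, Set.sInter_union, Set.mem_inter_iff,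
            Set.mem_sInter, Finset.mem_coe, Finset.mem_erase] at ha
          by_cases has : a ∈ s
          · have : a ∈ A ∩ ⋂₀ ↑T1 := by
              refine ⟨haA, fun u hu => ?_⟩
              by_cases hus : u = s
              · subst hus; exact has
              · exact ha.1 u ⟨hus, Finset.mem_coe.mp hu⟩
            rw [hT1e] at this; exact this
          · have : a ∈ A ∩ ⋂₀ ↑T2 := by
              refine ⟨haA, fun u hu => ?_⟩
              by_cases hus : u = A \ s
              · subst hus; exact ⟨haA, has⟩
              · exact ha.2 u ⟨hus, Finset.mem_coe.mp hu⟩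
            rw [hT2e] at this; exact this } with hx
    -- x ∈ C
    have hxC : x ∈ C := by
      rw [hCeq]
      refine Set.mem_iInter₂.mpr fun D hD => ?_
      exact hFm (Set.mem_insert_of_mem _ (Or.inl hD))
    -- y ∈ closure {x}
    refine Set.mem_iUnion₂.mpr ⟨x, hxC, ?_⟩
    rw [mem_closure_iff]
    intro o ho hyo
    have hgen : ∀ W, TopologicalSpace.GenerateOpen S W → y ∈ W → x ∈ W := by
      intro W hW
      induction hW with
      | basic V hV =>
        obtain ⟨U, hUo, hUd, rfl⟩ := hV
        intro hyV
        show U ∩ A ∈ m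
        exact hFm (Set.mem_insert_of_mem _ (Or.inr ⟨U, hUo, hUd, rfl, hyV⟩))
      | univ => intro _; trivial
      | inter V₁ V₂ _ _ ih1 ih2 => exact fun hyW => ⟨ih1 hyW.1, ih2 hyW.2⟩
      | sUnion 𝒯 _ ih =>
        rintro ⟨t, ht, hyt⟩
        exact ⟨t, ht, ih t ht hyt⟩
    have ho' : TopologicalSpace.GenerateOpen S o := ho
    exact ⟨x, hgen o ho' hyo, rfl⟩
  · refine Set.iUnion₂_subset fun x hx => ?_
    exact closure_mono (Set.singleton_subset_iff.mpr hx)
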